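/- In the Lie coalgebra with structure equations de¹ = de² = de⁴ = de⁵ = de⁶ = 0 and de³ = e²∧e⁴ + e¹∧e⁵, the 2-form ω̌ = e¹∧e⁴ + e²∧e⁵ + e³∧e⁶ satisfies d(ω̌²) = 0, and the complex 3-form Ω̌ = (e¹+ie⁴)∧(e²+ie⁵)∧(e³+ie⁶) satisfies dΩ̌ = 0. -/
import Mathlib


open ExteriorAlgebra Complex

/-- Basis 1-forms e¹,…,e⁶ (indexed 0,…,5) of the complexified exterior algebra. -/
noncomputable def e (i : Fin 6) : ExteriorAlgebra ℂ (Fin 6 → ℂ) :=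
  ExteriorAlgebra.ι ℂ (Pi.single i 1)

lemma e_sq (i : Fin 6) : e i * e i = 0 := ExteriorAlgebra.ι_sq_zero _

lemma e_sq' (i : Fin 6) (x : ExteriorAlgebra ℂ (Fin 6 → ℂ)) : e i * (e i * x) = 0 := by
  rw [← mul_assoc, e_sq, zero_mul]

lemma e_swap (i j : Fin 6) (_h : j < i) : e i * e j = -(e j * e i) := by
  have := ExteriorAlgebra.ι_add_mul_swap (R := ℂ) (M := Fin 6 → ℂ) (Pi.single i (1:ℂ)) (Pi.single j 1)
  have : e i * e j + e j * e i = 0 := this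
  linear_combination (norm := noncomm_ring) this

lemma e_swap' (i j : Fin 6) (h : j < i) (x : ExteriorAlgebra ℂ (Fin 6 → ℂ)) :
    e i * (e j * x) = -(e j * (e i * x)) := by
  rw [← mul_assoc, e_swap i j h, ← mul_assoc, neg_mul]

set_option maxHeartbeats 2000000 in
/-- In the Lie coalgebra with de¹ = de² = de⁴ = de⁵ = de⁶ = 0 and de³ = e²∧e⁴ + e¹∧e⁵
(the nilpotent Lie algebra 𝔥₃), ω̌ = e¹∧e⁴ + e²∧e⁵ + e³∧e⁶ satisfies d(ω̌²) = 0 and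
Ω̌ = (e¹+ie⁴)∧(e²+ie⁵)∧(e³+ie⁶) satisfies dΩ̌ = 0. -/
theorem stmt14
    (d : ExteriorAlgebra ℂ (Fin 6 → ℂ) →ₗ[ℂ] ExteriorAlgebra ℂ (Fin 6 → ℂ))
    (hone : d 1 = 0)
    (hder : ∀ (x : Fin 6 → ℂ) (ω : ExteriorAlgebra ℂ (Fin 6 → ℂ)),
      d (ExteriorAlgebra.ι ℂ x * ω) = d (ExteriorAlgebra.ι ℂ x) * ω -
        ExteriorAlgebra.ι ℂ x * d ω)
    (h1 : d (e 0) = 0) (h2 : d (e 1) = 0)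
    (h3 : d (e 2) = e 1 * e 3 + e 0 * e 4)
    (h4 : d (e 3) = 0) (h5 : d (e 4) = 0) (h6 : d (e 5) = 0) :
    d ((e 0 * e 3 + e 1 * e 4 + e 2 * e 5) * (e 0 * e 3 + e 1 * e 4 + e 2 * e 5)) = 0 ∧
      d ((e 0 + Complex.I • e 3) * (e 1 + Complex.I • e 4) * (e 2 + Complex.I • e 5)) = 0 := by
  have hd : ∀ (i : Fin 6) (ω : ExteriorAlgebra ℂ (Fin 6 → ℂ)),
      d (e i * ω) = d (e i) * ω - e i * d ω := fun i ω => hder _ ω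
  set ω : ExteriorAlgebra ℂ (Fin 6 → ℂ) := e 0 * e 3 + e 1 * e 4 + e 2 * e 5 with hω
  have hdω : d ω = (e 1 * e 3 + e 0 * e 4) * e 5 := by
    rw [hω, map_add, map_add, hd 0, hd 1, hd 2, h1, h2, h3, h4, h5, h6]
    noncomm_ring
  constructor
  · have expand : ω * ω = e 0 * (e 3 * ω) + e 1 * (e 4 * ω) + e 2 * (e 5 * ω) := by
      rw [hω]; noncomm_ring
    rw [expand, map_add, map_add, hd 0, hd 1, hd 2, hd 3, hd 4, hd 5, hdω,
      h1, h2, h3, h4, h5, h6, hω]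
    simp only [zero_mul, mul_zero, zero_sub, sub_zero, mul_neg, neg_neg, mul_add, add_mul,
      mul_assoc, e_sq, e_swap 3 1 (by decide), e_swap 3 0 (by decide),
      e_swap 4 1 (by decide), e_swap 4 0 (by decide), e_swap 4 3 (by decide),
      e_swap 5 0 (by decide), e_swap 5 1 (by decide), e_swap 5 2 (by decide),
      e_swap 5 3 (by decide), e_swap 5 4 (by decide), e_swap 2 0 (by decide),
      e_swap 2 1 (by decide), e_swap 1 0 (by decide), e_sq', e_swap' 3 1 (by decide), e_swap' 3 0 (by decide),
      e_swap' 4 1 (by decide), e_swap' 4 0 (by decide), e_swap' 4 3 (by decide),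
      e_swap' 5 0 (by decide), e_swap' 5 1 (by decide), e_swap' 5 2 (by decide),
      e_swap' 5 3 (by decide), e_swap' 5 4 (by decide), e_swap' 2 0 (by decide),
      e_swap' 2 1 (by decide), e_swap' 1 0 (by decide),
      mul_neg, neg_neg, mul_zero, neg_zero, zero_mul, add_zero, zero_add]
  · have expand : (e 0 + Complex.I • e 3) * (e 1 + Complex.I • e 4) * (e 2 + Complex.I • e 5)
        = e 0 * (e 1 * e 2) + Complex.I • (e 0 * (e 1 * e 5))
          + Complex.I • (e 0 * (e 4 * e 2)) + (Complex.I * Complex.I) • (e 0 * (e 4 * e 5))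
          + Complex.I • (e 3 * (e 1 * e 2)) + (Complex.I * Complex.I) • (e 3 * (e 1 * e 5))
          + (Complex.I * Complex.I) • (e 3 * (e 4 * e 2))
          + (Complex.I * (Complex.I * Complex.I)) • (e 3 * (e 4 * e 5)) := by
      simp only [mul_add, add_mul, smul_mul_assoc, mul_smul_comm, smul_smul, smul_add, mul_assoc]
      abel
    rw [expand]
    simp only [map_add, map_smul, hd 0, hd 1, hd 2, hd 3, hd 4, hd 5,
      h1, h2, h3, h4, h5, h6]
    simp only [zero_mul, mul_zero, zero_sub, sub_zero, mul_neg, neg_neg, mul_add, add_mul,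
      mul_assoc, e_sq, e_swap 3 1 (by decide), e_swap 3 0 (by decide),
      e_swap 4 1 (by decide), e_swap 4 0 (by decide), e_swap 4 3 (by decide),
      e_swap 5 0 (by decide), e_swap 5 1 (by decide), e_swap 5 2 (by decide),
      e_swap 5 3 (by decide), e_swap 5 4 (by decide), e_swap 2 0 (by decide),
      e_swap 2 1 (by decide), e_swap 1 0 (by decide), e_sq', e_swap' 3 1 (by decide), e_swap' 3 0 (by decide),
      e_swap' 4 1 (by decide), e_swap' 4 0 (by decide), e_swap' 4 3 (by decide),
      e_swap' 5 0 (by decide), e_swap' 5 1 (by decide), e_swap' 5 2 (by decide),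
      e_swap' 5 3 (by decide), e_swap' 5 4 (by decide), e_swap' 2 0 (by decide),
      e_swap' 2 1 (by decide), e_swap' 1 0 (by decide),
      mul_neg, neg_neg, mul_zero, neg_zero, zero_mul, add_zero, zero_add,
      smul_neg, smul_zero, smul_add]
    abel
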